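/- Let H be a group, α an automorphism of H, and V a subgroup with α(V) ≤ V, [V : α(V)] = q for a finite q ≥ 2, and H = ⋃_{n≥0} α^{−n}(V). Then the coset graph T^(α) is a tree in which every vertex has exactly q+1 neighbours; moreover, for each h ∈ H the left translation gαⁿ(V) ↦ hgαⁿ(V) and the map ᾱ : gαⁿ(V) ↦ α(g)α^{n+1}(V) are well-defined graph automorphisms of T^(α), and the group of graph automorphisms generated by ᾱ together with all left translations acts transitively on the vertex set of T^(α). -/

import Mathlib

namespace Scale

/-- A vertex of the `(q+1)`-regular tree `T_{q+1}`: a level `n ∈ ℤ` together with a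
labelling `ℤ → Fin q` which vanishes above the level and for all sufficiently small indices. -/
@[ext] structure Vertex (q : ℕ) where
  level : ℤ
  lab : ℤ → Fin q
  zero_gt : ∀ i : ℤ, level < i → (lab i : ℕ) = 0
  bdd : ∃ N : ℤ, ∀ i : ℤ, i < N → (lab i : ℕ) = 0

namespace Vertex

variable {q : ℕ} [NeZero q]

/-- The parent `v⁺` of a vertex. -/
def parent (v : Vertex q) : Vertex q where
  level := v.level - 1
  lab := fun i => if v.level - 1 < i then 0 else v.lab i
  zero_gt := by intro i hi; simp [hi]
  bdd := by
    obtain ⟨N, hN⟩ := v.bdd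
    refine ⟨N, fun i hi => ?_⟩
    by_cases h : v.level - 1 < i
    · simp [h]
    · simp [h, hN i hi]

/-- The child `vj` of a vertex `v`. -/
def child (v : Vertex q) (j : Fin q) : Vertex q where
  level := v.level + 1
  lab := fun i => if i = v.level + 1 then j else v.lab i
  zero_gt := by
    intro i hi
    have h1 : i ≠ v.level + 1 := by omega
    simp [h1, v.zero_gt i (by omega)]
  bdd := by
    obtain ⟨N, hN⟩ := v.bdd
    refine ⟨min N (v.level + 1), fun i hi => ?_⟩
    have h1 : i < N := lt_of_lt_of_le hi (min_le_left _ _)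
    have h2 : i < v.level + 1 := lt_of_lt_of_le hi (min_le_right _ _)
    have h3 : i ≠ v.level + 1 := by omega
    simp [h3, hN i h1]

/-- The restriction `w|_m` of a vertex to level `m`. -/
def trunc (v : Vertex q) (m : ℤ) : Vertex q where
  level := m
  lab := fun i => if m < i then 0 else v.lab i
  zero_gt := by intro i hi; simp [hi]
  bdd := by
    obtain ⟨N, hN⟩ := v.bdd
    refine ⟨N, fun i hi => ?_⟩
    by_cases h : m < i
    · simp [h]
    · simp [h, hN i hi]

/-- `w` is a descendant of `u` (in the rooted subtree `T_u`). -/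
def Descendant (u w : Vertex q) : Prop := u.level ≤ w.level ∧ trunc w u.level = u

end Vertex

/-- The all-zero vertex `ṽ_n` at level `n`. -/
def zeroVtx (q : ℕ) [NeZero q] (n : ℤ) : Vertex q where
  level := n
  lab := fun _ => 0
  zero_gt := by intro i _; simp
  bdd := ⟨0, by intro i _; simp⟩

/-- The map shifting all labels by `k` (a translation towards the end `ω` when `k > 0`). -/
def shiftMap {q : ℕ} (k : ℤ) (v : Vertex q) : Vertex q where
  level := v.level + k
  lab := fun i => v.lab (i - k)
  zero_gt := fun i hi => v.zero_gt (i - k) (by omega)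
  bdd := by
    obtain ⟨N, hN⟩ := v.bdd
    exact ⟨N + k, fun i hi => hN (i - k) (by omega)⟩

/-- The translation `x̃₀ᵏ` of `T_{q+1}` as a permutation of the vertices. -/
def shiftPerm (q : ℕ) (k : ℤ) : Equiv.Perm (Vertex q) where
  toFun := shiftMap k
  invFun := shiftMap (-k)
  left_inv := by
    intro v
    refine Vertex.ext ?_ ?_
    · show v.level + k + -k = v.level
      omega
    · funext i
      show v.lab (i - -k - k) = v.lab i
      congr 1
      omega
  right_inv := by
    intro v
    refine Vertex.ext ?_ ?_
    · show v.level + -k + k = v.level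
      omega
    · funext i
      show v.lab (i - k - -k) = v.lab i
      congr 1
      omega

/-- The group `Isom(T_{q+1})_ω` of tree automorphisms fixing the distinguished end `ω`,
realised as the subgroup of permutations of the vertex set commuting with `parent`. -/
def IsomOmega (q : ℕ) [NeZero q] : Subgroup (Equiv.Perm (Vertex q)) where
  carrier := {x | ∀ v : Vertex q, x (Vertex.parent v) = Vertex.parent (x v)}
  one_mem' := fun _ => rfl
  mul_mem' := by
    intro a b ha hb v
    show (a * b) (Vertex.parent v) = Vertex.parent ((a * b) v)
    rw [Equiv.Perm.mul_apply, Equiv.Perm.mul_apply, hb, ha]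
  inv_mem' := by
    intro a ha v
    show a⁻¹ (Vertex.parent v) = Vertex.parent (a⁻¹ v)
    have h := ha (a⁻¹ v)
    rw [Equiv.Perm.coe_inv, Equiv.apply_symm_apply] at h
    rw [← h, Equiv.Perm.coe_inv, Equiv.symm_apply_apply]

/-- The level shift `n(x)` of an automorphism (evaluated at the zero vertex; for members
of `IsomOmega q` the shift is the same at every vertex). -/
def lshift {q : ℕ} [NeZero q] (x : Equiv.Perm (Vertex q)) : ℤ := (x (zeroVtx q 0)).level

/-- An automorphism is elliptic if it fixes a vertex. -/
def Elliptic {q : ℕ} (x : Equiv.Perm (Vertex q)) : Prop := ∃ v : Vertex q, x v = v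

/-- Topology of pointwise convergence on `X → X` for `X` discrete. -/
def funTop (X : Type*) : TopologicalSpace (X → X) :=
  @Pi.topologicalSpace X (fun _ => X) (fun _ => ⊥)

/-- The permutation topology on `Equiv.Perm X`: pointwise stabilisers of finite sets of
points form a neighbourhood basis of the identity. -/
def permTop (X : Type*) : TopologicalSpace (Equiv.Perm X) :=
  @TopologicalSpace.induced (Equiv.Perm X) ((X → X) × (X → X))
    (fun g => ((g : X → X), ((g⁻¹ : Equiv.Perm X) : X → X)))
    (@instTopologicalSpaceProd _ _ (funTop X) (funTop X))

instance (q : ℕ) : TopologicalSpace (Equiv.Perm (Vertex q)) := permTop _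

instance (q : ℕ) : TopologicalSpace (Equiv.Perm (List (Fin q))) := permTop _

/-- A scale group: a closed subgroup of `Isom(T_{q+1})_ω` acting transitively on vertices. -/
def IsScaleGroup {q : ℕ} [NeZero q] (P : Subgroup (Equiv.Perm (Vertex q))) : Prop :=
  P ≤ IsomOmega q ∧ IsClosed (P : Set (Equiv.Perm (Vertex q))) ∧
    ∀ v w : Vertex q, ∃ x ∈ P, x v = w

/-- The stabiliser of the vertex `v` in `P`, as a subgroup of the ambient permutation group. -/
def stabIn {q : ℕ} (P : Subgroup (Equiv.Perm (Vertex q))) (v : Vertex q) :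
    Subgroup (Equiv.Perm (Vertex q)) where
  carrier := {g | g ∈ P ∧ g v = v}
  one_mem' := ⟨P.one_mem, rfl⟩
  mul_mem' := by
    intro a b ha hb
    exact ⟨P.mul_mem ha.1 hb.1, by rw [Equiv.Perm.mul_apply, hb.2, ha.2]⟩
  inv_mem' := by
    intro a ha
    refine ⟨P.inv_mem ha.1, ?_⟩
    rw [Equiv.Perm.inv_eq_iff_eq]
    exact ha.2.symm

/-- The conjugate subgroup `xVx⁻¹`. -/
def conjSub {G : Type*} [Group G] (x : G) (V : Subgroup G) : Subgroup G :=
  V.map (MulAut.conj x).toMonoidHom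

/-- The vertex `ξ|_m` on the ray towards the end represented by `ξ`. -/
def ray (q : ℕ) [NeZero q] (ξ : ℤ → Fin q) (N : ℤ) (hξ : ∀ i : ℤ, i < N → (ξ i : ℕ) = 0)
    (m : ℤ) : Vertex q where
  level := m
  lab := fun i => if m < i then 0 else ξ i
  zero_gt := by intro i hi; simp [hi]
  bdd := by
    refine ⟨N, fun i hi => ?_⟩
    by_cases h : m < i
    · simp [h]
    · simp [h, hξ i hi]

/-- The contraction group of `x` in `P`. -/
def conSet {q : ℕ} (P : Subgroup (Equiv.Perm (Vertex q))) (x : Equiv.Perm (Vertex q)) :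
    Set (Equiv.Perm (Vertex q)) :=
  {g | g ∈ P ∧ ∀ v : Vertex q, ∃ N : ℕ, ∀ n : ℕ, N ≤ n → (x ^ n * g * (x ^ n)⁻¹) v = v}


/-- `c` is a `P`-labelling of `T_{q+1}` with distinguished bi-infinite path `vp`:
each `c v` is a bijection from the directed edges out of `v` (encoded as the
neighbours of `v`) to `{0, …, q}`; the edge towards the parent is labelled `q`;
along the path `vp` the downward edges are labelled `0`; and `P` contains, for
all `u₁, u₂`, an element carrying `u₁` to `u₂` and preserving the labels on the
rooted subtree of descendants of `u₁`. -/
def IsPLabelling {q : ℕ} [NeZero q] (P : Subgroup (Equiv.Perm (Vertex q)))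
    (c : Vertex q → Vertex q → Fin (q + 1)) (vp : ℤ → Vertex q) : Prop :=
  (∀ v : Vertex q, ∀ j : Fin (q + 1),
      ∃! w : Vertex q, (Vertex.parent w = v ∨ w = Vertex.parent v) ∧ c v w = j) ∧
  (∀ v : Vertex q, (c v (Vertex.parent v) : ℕ) = q) ∧
  (∀ n : ℤ, Vertex.parent (vp (n + 1)) = vp n) ∧
  (∀ n : ℤ, (c (vp n) (vp (n + 1)) : ℕ) = 0) ∧
  (∀ u₁ u₂ : Vertex q, ∃ x, x ∈ P ∧ x u₁ = u₂ ∧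
    ∀ w w' : Vertex q, Vertex.Descendant u₁ w → Vertex.Descendant u₁ w' →
      (Vertex.parent w = w' ∨ Vertex.parent w' = w) → c (x w) (x w') = c w w')

open Classical in
/-- The standard labelling of `T_{q+1}`: the edge from `v` to its child `vj` is
labelled `j` and the edge towards the parent is labelled `q`. -/
noncomputable def stdLabel (q : ℕ) [NeZero q] : Vertex q → Vertex q → Fin (q + 1) :=
  fun v w =>
    if Vertex.parent w = v then Fin.castLE (Nat.le_succ q) (w.lab (v.level + 1))
    else Fin.last q

/-- Convert an edge label in `{0,…,q}` known to be `< q` into a letter in `{0,…,q-1}`. -/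
def toFinQ {q : ℕ} [NeZero q] (j : Fin (q + 1)) : Fin q :=
  if h : (j : ℕ) < q then ⟨j, h⟩ else ⟨0, Nat.pos_of_ne_zero (NeZero.ne q)⟩

/-- The string of labels read along the downward path of length `d` ending at `w`. -/
def labelString {q : ℕ} [NeZero q] (c : Vertex q → Vertex q → Fin (q + 1)) :
    Vertex q → ℕ → List (Fin q)
  | _, 0 => []
  | w, (d + 1) => labelString c (Vertex.parent w) d ++ [toFinQ (c (Vertex.parent w) w)]

/-- The isomorphism `φ^c_v : T_v → T_{q,q}` given by a labelling `c`: a descendant `w`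
of `v` is sent to the string of labels along the path from `v` down to `w`. -/
def phiStr {q : ℕ} [NeZero q] (c : Vertex q → Vertex q → Fin (q + 1)) (v w : Vertex q) :
    List (Fin q) :=
  labelString c w ((w.level - v.level).toNat)

/-- The set `P|_v = {φ^c_{x(v)} ∘ x ∘ (φ^c_v)⁻¹ : x ∈ P}` of sections of elements of `P`
at the vertex `v`, with respect to the labelling `c`. -/
def sectSet {q : ℕ} [NeZero q] (P : Subgroup (Equiv.Perm (Vertex q)))
    (c : Vertex q → Vertex q → Fin (q + 1)) (v : Vertex q) :
    Set (Equiv.Perm (List (Fin q))) :=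
  {g | ∃ x, x ∈ P ∧ ∀ w : Vertex q, Vertex.Descendant v w →
        g (phiStr c v w) = phiStr c (x v) (x w)}

/-- The standard isomorphism `φ_v : T_v → T_{q,q}`: a descendant `w` of `v` of level `m`
is sent to the string `(w_{n+1}, …, w_m)` where `n` is the level of `v`. -/
def stdStr {q : ℕ} (v w : Vertex q) : List (Fin q) :=
  (List.range (w.level - v.level).toNat).map fun k => w.lab (v.level + 1 + k)

/-- The set `{φ_{x(v)} ∘ x ∘ φ_v⁻¹ : x ∈ P}` with respect to the standard isomorphisms. -/
def stdSect {q : ℕ} [NeZero q] (P : Subgroup (Equiv.Perm (Vertex q))) (v : Vertex q) :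
    Set (Equiv.Perm (List (Fin q))) :=
  {g | ∃ x, x ∈ P ∧ ∀ w : Vertex q, Vertex.Descendant v w →
        g (stdStr v w) = stdStr (x v) (x w)}

/-- `Isom(T_{q,q})`: the group of permutations of the set of finite strings over
`{0,…,q-1}` preserving length and the prefix relation. -/
def RIsom (q : ℕ) : Subgroup (Equiv.Perm (List (Fin q))) where
  carrier := {g | (∀ l : List (Fin q), (g l).length = l.length) ∧
    ∀ l₁ l₂ : List (Fin q), l₁ <+: l₂ → g l₁ <+: g l₂}
  one_mem' := ⟨fun _ => rfl, fun _ _ h => h⟩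
  mul_mem' := by
    intro a b ha hb
    constructor
    · intro l
      rw [Equiv.Perm.mul_apply, ha.1, hb.1]
    · intro l₁ l₂ h
      rw [Equiv.Perm.mul_apply, Equiv.Perm.mul_apply]
      exact ha.2 _ _ (hb.2 _ _ h)
  inv_mem' := by
    intro a ha
    have hlen : ∀ l : List (Fin q), (a⁻¹ l).length = l.length := by
      intro l
      have h := ha.1 (a⁻¹ l)
      rw [Equiv.Perm.coe_inv, Equiv.apply_symm_apply] at h
      exact h.symm
    refine ⟨hlen, ?_⟩
    intro l₁ l₂ h
    have htake : List.take (a⁻¹ l₁).length (a⁻¹ l₂) <+: a⁻¹ l₂ := List.take_prefix _ _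
    have h2 : a (List.take (a⁻¹ l₁).length (a⁻¹ l₂)) <+: a (a⁻¹ l₂) := ha.2 _ _ htake
    rw [Equiv.Perm.coe_inv, Equiv.apply_symm_apply] at h2
    have hle : l₁.length ≤ l₂.length := h.length_le
    have hlen3 : (a (List.take (a⁻¹ l₁).length (a⁻¹ l₂))).length = l₁.length := by
      rw [ha.1, List.length_take, hlen, hlen]
      omega
    have hpre : a (List.take (a⁻¹ l₁).length (a⁻¹ l₂)) <+: l₁ :=
      List.prefix_of_prefix_length_le h2 h (le_of_eq hlen3)
    have heq : a (List.take (a⁻¹ l₁).length (a⁻¹ l₂)) = l₁ := hpre.eq_of_length hlen3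
    have heq2 : List.take (a⁻¹ l₁).length (a⁻¹ l₂) = a⁻¹ l₁ := by
      apply a.injective
      rw [heq, Equiv.Perm.coe_inv, Equiv.apply_symm_apply]
    rw [← heq2]
    exact List.take_prefix _ _

/-- A subgroup of `Isom(T_{q,q})` is self-replicating if it is self-similar, transitive
on level 1, and all the section homomorphisms `g ↦ g|_w` are surjective. -/
def SelfReplicating {q : ℕ} (G : Subgroup (Equiv.Perm (List (Fin q)))) : Prop :=
  (∀ w : List (Fin q), ∀ g, g ∈ G → g w = w →
      ∃ g', g' ∈ G ∧ ∀ v : List (Fin q), g (w ++ v) = w ++ g' v) ∧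
  (∀ j j' : Fin q, ∃ g ∈ G, g [j] = [j']) ∧
  (∀ w : List (Fin q), ∀ g', g' ∈ G →
      ∃ g, g ∈ G ∧ g w = w ∧ ∀ v : List (Fin q), g (w ++ v) = w ++ g' v)

/-- The stabiliser of the string `w` in `G ≤ Isom(T_{q,q})`, as a subgroup of `G`. -/
def rstab {q : ℕ} (G : Subgroup (Equiv.Perm (List (Fin q)))) (w : List (Fin q)) :
    Subgroup G where
  carrier := {g | (g : Equiv.Perm (List (Fin q))) w = w}
  one_mem' := rfl
  mul_mem' := by
    intro a b ha hb
    show ((a * b : G) : Equiv.Perm (List (Fin q))) w = w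
    rw [Subgroup.coe_mul, Equiv.Perm.mul_apply]
    rw [show (b : Equiv.Perm (List (Fin q))) w = w from hb,
      show (a : Equiv.Perm (List (Fin q))) w = w from ha]
  inv_mem' := by
    intro a ha
    show ((a⁻¹ : G) : Equiv.Perm (List (Fin q))) w = w
    rw [Subgroup.coe_inv, Equiv.Perm.inv_eq_iff_eq]
    exact (show (a : Equiv.Perm (List (Fin q))) w = w from ha).symm


end Scale
namespace Scale

section CosetGraph

variable {H : Type*} [Group H]

/-- The subgroup `αⁿ(V)`. -/
def aSub (α : MulAut H) (V : Subgroup H) (n : ℤ) : Subgroup H :=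
  V.map ((α ^ n).toMonoidHom)

/-- The vertex set of the coset graph `T^(α)`: the disjoint union over `n ∈ ℤ` of the
coset spaces `H/αⁿ(V)`. -/
abbrev CVert (α : MulAut H) (V : Subgroup H) : Type _ := Σ n : ℤ, H ⧸ aSub α V n

/-- The coset of `H` represented by a vertex of `T^(α)`, as a subset of `H`. -/
def cosetSet (α : MulAut H) (V : Subgroup H) (u : CVert α V) : Set H :=
  {h : H | (QuotientGroup.mk h : H ⧸ aSub α V u.1) = u.2}

/-- The coset graph `T^(α)`: a vertex `u ∈ H/α^{n+1}(V)` is adjacent to a vertex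
`u' ∈ H/αⁿ(V)` iff `u ⊆ u'` as subsets of `H`. -/
def cosetGraph (α : MulAut H) (V : Subgroup H) : SimpleGraph (CVert α V) where
  Adj u u' := (u.1 = u'.1 + 1 ∧ cosetSet α V u ⊆ cosetSet α V u') ∨
    (u'.1 = u.1 + 1 ∧ cosetSet α V u' ⊆ cosetSet α V u)
  symm := by
    constructor
    intro u u' h
    rcases h with h | h
    · exact Or.inr h
    · exact Or.inl h
  loopless := by
    constructor
    intro u h
    rcases h with ⟨h, -⟩ | ⟨h, -⟩ <;> omega

end CosetGraph

end Scale

namespace Scale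
namespace St14

variable {H : Type*} [Group H] (α : MulAut H) (V : Subgroup H)

lemma aSub_add (k n : ℤ) : aSub α V (n + k) = (aSub α V n).map (α ^ k).toMonoidHom := by
  have hc : (α ^ k).toMonoidHom.comp (α ^ n).toMonoidHom = (α ^ (n + k)).toMonoidHom := by
    ext x
    show (α ^ k) ((α ^ n) x) = (α ^ (n + k)) x
    rw [← MulAut.mul_apply, ← zpow_add, add_comm]
  unfold aSub
  rw [Subgroup.map_map, hc]

lemma aSub_zero : aSub α V 0 = V := by
  unfold aSub
  ext x
  simp

lemma mem_aSub_add_iff (k n : ℤ) (x : H) :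
    (α ^ k) x ∈ aSub α V (n + k) ↔ x ∈ aSub α V n := by
  rw [aSub_add, Subgroup.mem_map_equiv]
  simp

lemma mem_aSub_iff' (k m : ℤ) (x : H) :
    (α ^ k) x ∈ aSub α V m ↔ x ∈ aSub α V (m - k) := by
  have := mem_aSub_add_iff α V k (m - k) x
  rwa [sub_add_cancel] at this

lemma aSub_one_eq : aSub α V 1 = V.map α.toMonoidHom := by
  unfold aSub
  rw [zpow_one]

variable {α V}

section Mono
variable (hmap : aSub α V 1 ≤ V)
include hmap

lemma aSub_succ_le (n : ℤ) : aSub α V (n + 1) ≤ aSub α V n := by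
  have h1 : aSub α V (n + 1) = (aSub α V 1).map ((α ^ n).toMonoidHom) := by
    have := aSub_add α V n 1
    rw [add_comm] at this
    rw [this]
  rw [h1]
  calc (aSub α V 1).map ((α ^ n).toMonoidHom) ≤ V.map ((α ^ n).toMonoidHom) :=
        Subgroup.map_mono hmap
    _ = aSub α V n := rfl

lemma aSub_mono : ∀ {n m : ℤ}, n ≤ m → aSub α V m ≤ aSub α V n := by
  have key : ∀ (k : ℕ) (n : ℤ), aSub α V (n + k) ≤ aSub α V n := by
    intro k
    induction k with
    | zero => intro n; simp
    | succ k ih =>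
      intro n
      have h : (n : ℤ) + (k + 1 : ℕ) = (n + k) + 1 := by push_cast; ring
      rw [h]
      exact le_trans (aSub_succ_le hmap _) (ih n)
  intro n m h
  have : m = n + (m - n).toNat := by omega
  rw [this]
  exact key _ n

/-- The coset map `H ⧸ α^{n+1}(V) → H ⧸ αⁿ(V)`. -/
def dmap (n : ℤ) : H ⧸ aSub α V (n + 1) → H ⧸ aSub α V n :=
  Quotient.map' id (fun a b hab => by
    rw [QuotientGroup.leftRel_apply] at hab ⊢
    exact aSub_succ_le hmap n hab)

@[simp] lemma dmap_mk (n : ℤ) (g : H) :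
    dmap hmap n (QuotientGroup.mk g) = QuotientGroup.mk g := rfl

lemma cosetSet_subset_iff (n : ℤ) (g g' : H) :
    cosetSet α V ⟨n + 1, QuotientGroup.mk g⟩ ⊆ cosetSet α V ⟨n, QuotientGroup.mk g'⟩ ↔
      (QuotientGroup.mk g : H ⧸ aSub α V n) = QuotientGroup.mk g' := by
  constructor
  · intro hs
    have hg : g ∈ cosetSet α V ⟨n + 1, QuotientGroup.mk g⟩ := rfl
    exact hs hg
  · intro he h hh
    show (QuotientGroup.mk h : H ⧸ aSub α V n) = QuotientGroup.mk g'
    rw [← he]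
    have h1 : h⁻¹ * g ∈ aSub α V (n + 1) := QuotientGroup.eq.mp hh
    exact QuotientGroup.eq.mpr (aSub_succ_le hmap n h1)

lemma adj_iff {n m : ℤ} (g g' : H) :
    (cosetGraph α V).Adj ⟨n, QuotientGroup.mk g⟩ ⟨m, QuotientGroup.mk g'⟩ ↔
      (n = m + 1 ∧ (QuotientGroup.mk g : H ⧸ aSub α V m) = QuotientGroup.mk g') ∨
      (m = n + 1 ∧ (QuotientGroup.mk g' : H ⧸ aSub α V n) = QuotientGroup.mk g) := by
  constructor
  · rintro (⟨h1, h2⟩ | ⟨h1, h2⟩)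
    · obtain rfl : n = m + 1 := h1
      exact Or.inl ⟨rfl, (cosetSet_subset_iff hmap m g g').mp h2⟩
    · obtain rfl : m = n + 1 := h1
      exact Or.inr ⟨rfl, (cosetSet_subset_iff hmap n g' g).mp h2⟩
  · rintro (⟨rfl, h2⟩ | ⟨rfl, h2⟩)
    · exact Or.inl ⟨rfl, (cosetSet_subset_iff hmap m g g').mpr h2⟩
    · exact Or.inr ⟨rfl, (cosetSet_subset_iff hmap n g' g).mpr h2⟩

lemma neighborSet_eq (n : ℤ) (y : H ⧸ aSub α V (n + 1)) :
    (cosetGraph α V).neighborSet ⟨n + 1, y⟩ =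
      insert (⟨n, dmap hmap n y⟩ : CVert α V)
        ((fun z : H ⧸ aSub α V (n + 1 + 1) => (⟨n + 1 + 1, z⟩ : CVert α V)) ''
          {z : H ⧸ aSub α V (n + 1 + 1) | dmap hmap (n + 1) z = y}) := by
  obtain ⟨g, rfl⟩ := Quotient.exists_rep y
  ext u'
  obtain ⟨m, x'⟩ := u'
  obtain ⟨g', rfl⟩ := Quotient.exists_rep x'
  show (cosetGraph α V).Adj _ _ ↔ _
  rw [adj_iff hmap]
  constructor
  · rintro (⟨h1, h2⟩ | ⟨rfl, h2⟩)
    · have hm : m = n := by omega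
      subst hm
      left
      rw [dmap_mk]
      exact congrArg (fun w => (⟨m, w⟩ : CVert α V)) h2.symm
    · right
      exact ⟨Quotient.mk _ g', h2, rfl⟩
  · rintro (h | ⟨z, hz1, hz2⟩)
    · left
      obtain ⟨hm, hsnd⟩ := Sigma.mk.inj_iff.mp h
      subst hm
      refine ⟨rfl, ?_⟩
      have h2 : (Quotient.mk _ g' : H ⧸ aSub α V m) = dmap hmap m (Quotient.mk _ g) :=
        eq_of_heq hsnd
      rw [dmap_mk] at h2
      exact h2.symm
    · obtain ⟨hm, hz⟩ := Sigma.mk.inj_iff.mp hz2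
      subst hm
      right
      refine ⟨rfl, ?_⟩
      have : z = Quotient.mk _ g' := eq_of_heq hz
      subst this
      exact hz1

/-- Bijection between the fiber of `dmap` over `⟦g⟧` and `V ⧸ (αV).subgroupOf V`. -/
noncomputable def fiberEquiv (n : ℤ) (g : H) :
    (V ⧸ (aSub α V 1).subgroupOf V) ≃
      {z : H ⧸ aSub α V (n + 1 + 1) | dmap hmap (n + 1) z = QuotientGroup.mk g} := by
  have e1 : (0 : ℤ) + (n + 1) = n + 1 := by ring
  have e2 : (1 : ℤ) + (n + 1) = n + 1 + 1 := by ring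
  refine Equiv.ofBijective (fun c => Quotient.liftOn' c
    (fun v => ⟨QuotientGroup.mk (g * (α ^ (n + 1)) (v : H)), ?_⟩) ?_) ⟨?_, ?_⟩
  · show dmap hmap (n + 1) (QuotientGroup.mk (g * (α ^ (n + 1)) (v : H))) = QuotientGroup.mk g
    rw [dmap_mk]
    refine QuotientGroup.eq.mpr ?_
    have : (g * (α ^ (n + 1)) (v : H))⁻¹ * g = (α ^ (n + 1)) ((v : H)⁻¹) := by
      rw [map_inv]
      group
    rw [this, mem_aSub_iff']
    have e : n + 1 - (n + 1) = (0 : ℤ) := by ring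
    rw [e, aSub_zero]
    exact V.inv_mem v.2
  · intro v w hvw
    have hm : (v : H)⁻¹ * (w : H) ∈ aSub α V 1 := by
      rw [QuotientGroup.leftRel_apply, Subgroup.mem_subgroupOf] at hvw
      simpa using hvw
    refine Subtype.ext ?_
    show QuotientGroup.mk (g * (α ^ (n + 1)) (v : H)) = QuotientGroup.mk (g * (α ^ (n + 1)) (w : H))
    refine QuotientGroup.eq.mpr ?_
    have : (g * (α ^ (n + 1)) (v : H))⁻¹ * (g * (α ^ (n + 1)) (w : H)) =
        (α ^ (n + 1)) ((v : H)⁻¹ * (w : H)) := by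
      rw [map_mul, map_inv]
      group
    rw [this, mem_aSub_iff']
    have e : n + 1 + 1 - (n + 1) = (1 : ℤ) := by ring
    rwa [e]
  · -- injective
    intro c₁ c₂ hc
    induction c₁ using Quotient.inductionOn' with | h v =>
    induction c₂ using Quotient.inductionOn' with | h w =>
    have h1 : (QuotientGroup.mk (g * (α ^ (n + 1)) (v : H)) :
        H ⧸ aSub α V (n + 1 + 1)) = QuotientGroup.mk (g * (α ^ (n + 1)) (w : H)) :=
      congrArg Subtype.val hc
    have h2 : (g * (α ^ (n + 1)) (v : H))⁻¹ * (g * (α ^ (n + 1)) (w : H)) ∈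
        aSub α V (n + 1 + 1) := QuotientGroup.eq.mp h1
    have h3 : (α ^ (n + 1)) ((v : H)⁻¹ * (w : H)) ∈ aSub α V (n + 1 + 1) := by
      have : (g * (α ^ (n + 1)) (v : H))⁻¹ * (g * (α ^ (n + 1)) (w : H)) =
          (α ^ (n + 1)) ((v : H)⁻¹ * (w : H)) := by
        rw [map_mul, map_inv]
        group
      rwa [this] at h2
    rw [mem_aSub_iff'] at h3
    have e : n + 1 + 1 - (n + 1) = (1 : ℤ) := by ring
    rw [e] at h3
    apply Quotient.sound'
    rw [QuotientGroup.leftRel_apply, Subgroup.mem_subgroupOf]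
    simpa using h3
  · -- surjective
    rintro ⟨z, hz⟩
    obtain ⟨h, rfl⟩ := Quotient.exists_rep z
    have hz' : (QuotientGroup.mk h : H ⧸ aSub α V (n + 1)) = QuotientGroup.mk g := hz
    have h1 : g⁻¹ * h ∈ aSub α V (n + 1) := QuotientGroup.eq.mp hz'.symm
    rw [show aSub α V (n + 1) = aSub α V (0 + (n + 1)) from by rw [e1], aSub_add] at h1
    obtain ⟨v, hv, hveq⟩ := h1
    refine ⟨QuotientGroup.mk ⟨v, by rwa [aSub_zero] at hv⟩, ?_⟩
    refine Subtype.ext ?_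
    show QuotientGroup.mk (g * (α ^ (n + 1)) v) = (QuotientGroup.mk h : H ⧸ aSub α V (n + 1 + 1))
    have : g * (α ^ (n + 1)) v = h := by
      have : (α ^ (n + 1)) v = g⁻¹ * h := hveq
      rw [this]
      group
    rw [this]

lemma neighborSet_ncard {q : ℕ} (hidx : (aSub α V 1).relIndex V = q) (hq : 2 ≤ q)
    (u : CVert α V) : ((cosetGraph α V).neighborSet u).ncard = q + 1 := by
  obtain ⟨k, y⟩ := u
  obtain ⟨n, rfl⟩ : ∃ n : ℤ, k = n + 1 := ⟨k - 1, by omega⟩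
  obtain ⟨g, rfl⟩ := Quotient.exists_rep y
  rw [neighborSet_eq hmap]
  have hfib : {z : H ⧸ aSub α V (n + 1 + 1) | dmap hmap (n + 1) z =
      Quotient.mk _ g}.ncard = q := by
    rw [← Nat.card_coe_set_eq]
    rw [Nat.card_congr (fiberEquiv hmap n g).symm]
    exact hidx
  have hfin : {z : H ⧸ aSub α V (n + 1 + 1) | dmap hmap (n + 1) z =
      Quotient.mk _ g}.Finite := by
    rw [← Set.finite_coe_iff]
    have : Nat.card {z : H ⧸ aSub α V (n + 1 + 1) | dmap hmap (n + 1) z =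
        Quotient.mk _ g} ≠ 0 := by
      rw [Nat.card_coe_set_eq, hfib]
      omega
    exact (Nat.card_ne_zero.mp this).2
  have hnm : (⟨n, dmap hmap n (Quotient.mk _ g)⟩ : CVert α V) ∉
      (fun z : H ⧸ aSub α V (n + 1 + 1) => (⟨n + 1 + 1, z⟩ : CVert α V)) ''
        {z : H ⧸ aSub α V (n + 1 + 1) | dmap hmap (n + 1) z = Quotient.mk _ g} := by
    rintro ⟨z, hz1, hz2⟩
    have := congrArg Sigma.fst hz2
    simp only at this
    omega
  rw [Set.ncard_insert_of_notMem hnm (hfin.image _)]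
  have hfun : (fun z : H ⧸ aSub α V (n + 1 + 1) => (⟨n + 1 + 1, z⟩ : CVert α V)) =
      @Sigma.mk ℤ (fun m => H ⧸ aSub α V m) (n + 1 + 1) := rfl
  rw [hfun, Set.ncard_image_of_injective _ sigma_mk_injective, hfib]

lemma adj_down (n : ℤ) (g : H) :
    (cosetGraph α V).Adj ⟨n, QuotientGroup.mk g⟩ ⟨n - 1, QuotientGroup.mk g⟩ := by
  have h := (adj_iff hmap (n := n) (m := n - 1) g g).mpr (Or.inl ⟨by ring, rfl⟩)
  exact h

lemma reachable_down (n : ℤ) (k : ℕ) (g : H) :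
    (cosetGraph α V).Reachable ⟨n, QuotientGroup.mk g⟩ ⟨n - (k : ℤ), QuotientGroup.mk g⟩ := by
  induction k with
  | zero =>
    have e : n - ((0 : ℕ) : ℤ) = n := by simp
    rw [e]
  | succ k ih =>
    refine ih.trans ?_
    have e : n - ((k + 1 : ℕ) : ℤ) = n - (k : ℤ) - 1 := by push_cast; ring
    rw [e]
    exact (adj_down hmap (n - (k : ℤ)) g).reachable

lemma reachable_to (n L : ℤ) (hL : L ≤ n) (g : H) :
    (cosetGraph α V).Reachable ⟨n, QuotientGroup.mk g⟩ ⟨L, QuotientGroup.mk g⟩ := by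
  have e : L = n - ((n - L).toNat : ℤ) := by omega
  rw [e]
  exact reachable_down hmap n _ g

lemma connected (hunion : ∀ h : H, ∃ n : ℕ, (α ^ (n : ℤ)) h ∈ V) :
    (cosetGraph α V).Connected := by
  rw [SimpleGraph.connected_iff]
  refine ⟨?_, ⟨⟨0, QuotientGroup.mk 1⟩⟩⟩
  rintro ⟨n, x⟩ ⟨m, x'⟩
  obtain ⟨g, rfl⟩ := Quotient.exists_rep x
  obtain ⟨g', rfl⟩ := Quotient.exists_rep x'
  obtain ⟨k, hk⟩ := hunion (g⁻¹ * g')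
  have hk' : g⁻¹ * g' ∈ aSub α V (0 - (k : ℤ)) := by
    rw [← mem_aSub_iff', aSub_zero]
    exact hk
  set L : ℤ := min n (min m (0 - (k : ℤ))) with hLdef
  have hgL : g⁻¹ * g' ∈ aSub α V L :=
    aSub_mono hmap (by omega : L ≤ 0 - (k : ℤ)) hk'
  have h1 : (cosetGraph α V).Reachable ⟨n, QuotientGroup.mk g⟩ ⟨L, QuotientGroup.mk g⟩ :=
    reachable_to hmap n L (by omega) g
  have h2 : (cosetGraph α V).Reachable ⟨m, QuotientGroup.mk g'⟩ ⟨L, QuotientGroup.mk g'⟩ :=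
    reachable_to hmap m L (by omega) g'
  have h3 : (⟨L, QuotientGroup.mk g⟩ : CVert α V) = ⟨L, QuotientGroup.mk g'⟩ :=
    congrArg (fun w => (⟨L, w⟩ : CVert α V)) (QuotientGroup.eq.mpr hgL)
  rw [h3] at h1
  exact h1.trans h2.symm

lemma adj_level {u u' : CVert α V} (h : (cosetGraph α V).Adj u u') :
    u.1 = u'.1 + 1 ∨ u'.1 = u.1 + 1 := by
  rcases h with ⟨h1, -⟩ | ⟨h1, -⟩
  · exact Or.inl h1
  · exact Or.inr h1

lemma parent_unique {u u₁ u₂ : CVert α V} (h₁ : (cosetGraph α V).Adj u u₁)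
    (h₂ : (cosetGraph α V).Adj u u₂) (l₁ : u.1 = u₁.1 + 1) (l₂ : u.1 = u₂.1 + 1) :
    u₁ = u₂ := by
  obtain ⟨n, x⟩ := u
  obtain ⟨m₁, x₁⟩ := u₁
  obtain ⟨m₂, x₂⟩ := u₂
  obtain ⟨g, rfl⟩ := Quotient.exists_rep x
  obtain ⟨g₁, rfl⟩ := Quotient.exists_rep x₁
  obtain ⟨g₂, rfl⟩ := Quotient.exists_rep x₂
  simp only at l₁ l₂
  have hm : m₁ = m₂ := by omega
  subst hm
  rw [adj_iff hmap] at h₁ h₂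
  rcases h₁ with ⟨-, e₁⟩ | ⟨h, -⟩
  · rcases h₂ with ⟨-, e₂⟩ | ⟨h, -⟩
    · exact congrArg (fun w => (⟨m₁, w⟩ : CVert α V)) (e₁.symm.trans e₂)
    · omega
  · omega

lemma isAcyclic : (cosetGraph α V).IsAcyclic := by
  classical
  intro v₀ c₀ hc₀
  -- pick a vertex of maximal level on the cycle
  have hne : c₀.support.toFinset.Nonempty := by
    rw [List.toFinset_nonempty_iff]
    exact c₀.support_ne_nil
  obtain ⟨u, hu, hmax⟩ := c₀.support.toFinset.exists_max_image (fun w => w.1) hne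
  rw [List.mem_toFinset] at hu
  have hmax' : ∀ w ∈ c₀.support, w.1 ≤ u.1 := by
    intro w hw
    exact hmax w (List.mem_toFinset.mpr hw)
  -- rotate the cycle to start at u
  have hc : (c₀.rotate u hu).IsCycle := hc₀.rotate hu
  have hsupp : ∀ w ∈ (c₀.rotate u hu).support, w.1 ≤ u.1 := by
    intro w hw
    rcases SimpleGraph.Walk.mem_support_iff _|>.mp hw with rfl | hw'
    · exact le_refl _
    · have : w ∈ c₀.support.tail :=
        (List.IsRotated.mem_iff (SimpleGraph.Walk.support_rotate c₀ u hu)).mp hw'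
      exact hmax' w (List.mem_of_mem_tail this)
  generalize c₀.rotate u hu = c at hc hsupp
  -- destructure the cycle
  have hnn : ¬ c.Nil := hc.not_nil
  obtain ⟨w, hadj, q, rfl⟩ := SimpleGraph.Walk.not_nil_iff.mp hnn
  rw [SimpleGraph.Walk.cons_isCycle_iff] at hc
  obtain ⟨hq, hedge⟩ := hc
  -- the last edge of q
  have hqnn : ¬ q.reverse.Nil := by
    rw [SimpleGraph.Walk.nil_iff_length_eq, SimpleGraph.Walk.length_reverse]
    intro h0
    have := SimpleGraph.Walk.eq_of_length_eq_zero h0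
    exact (cosetGraph α V).loopless.irrefl u (this ▸ hadj)
  obtain ⟨w₂, hadj₂, r, hr⟩ := SimpleGraph.Walk.not_nil_iff.mp hqnn
  -- levels
  have hwsup : w ∈ SimpleGraph.Walk.support (SimpleGraph.Walk.cons hadj q) := by
    simp [SimpleGraph.Walk.support_cons]
  have hw2sup : w₂ ∈ SimpleGraph.Walk.support (SimpleGraph.Walk.cons hadj q) := by
    have : w₂ ∈ q.reverse.support := by
      rw [hr]
      simp [SimpleGraph.Walk.support_cons]
    rw [SimpleGraph.Walk.support_reverse, List.mem_reverse] at this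
    simp [SimpleGraph.Walk.support_cons]
    exact Or.inr this
  have hlw : u.1 = w.1 + 1 := by
    rcases adj_level hmap hadj with h | h
    · exact h
    · exfalso
      have := hsupp w hwsup
      omega
  have hlw₂ : u.1 = w₂.1 + 1 := by
    rcases adj_level hmap hadj₂ with h | h
    · exact h
    · exfalso
      have := hsupp w₂ hw2sup
      omega
  have heq : w = w₂ := parent_unique hmap hadj hadj₂ hlw hlw₂
  subst heq
  -- then the edge s(u, w) appears in q, contradiction
  apply hedge
  have : s(u, w) ∈ q.reverse.edges := by
    rw [hr]
    simp [SimpleGraph.Walk.edges_cons]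
  rwa [SimpleGraph.Walk.edges_reverse, List.mem_reverse] at this

section Autos

omit hmap in
lemma vmk_congr {n m : ℤ} (e : n = m) {g g' : H} (hg : g = g') :
    (⟨n, QuotientGroup.mk g⟩ : CVert α V) = ⟨m, QuotientGroup.mk g'⟩ := by
  subst e; subst hg; rfl

omit hmap in
lemma mk_eq_mk_iff (n : ℤ) (g g' : H) :
    (QuotientGroup.mk (α g) : H ⧸ aSub α V (n + 1)) = QuotientGroup.mk (α g') ↔
      (QuotientGroup.mk g : H ⧸ aSub α V n) = QuotientGroup.mk g' := by
  rw [QuotientGroup.eq, QuotientGroup.eq]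
  have h1 : (α g)⁻¹ * α g' = (α ^ (1 : ℤ)) (g⁻¹ * g') := by
    rw [zpow_one, map_mul, map_inv]
  rw [h1, mem_aSub_iff']
  have e : n + 1 - 1 = n := by ring
  rw [e]

/-- Left translation as an equivalence of the vertex set. -/
def lEquiv (h : H) : CVert α V ≃ CVert α V :=
  Equiv.sigmaCongrRight (fun n => Quotient.congr (Equiv.mulLeft h) (by
    intro a b
    rw [QuotientGroup.leftRel_apply, QuotientGroup.leftRel_apply]
    show a⁻¹ * b ∈ aSub α V n ↔ (h * a)⁻¹ * (h * b) ∈ aSub α V n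
    have : (h * a)⁻¹ * (h * b) = a⁻¹ * b := by group
    rw [this]))

omit hmap in
@[simp] lemma lEquiv_mk (h : H) (n : ℤ) (g : H) :
    lEquiv (α := α) (V := V) h ⟨n, QuotientGroup.mk g⟩ = ⟨n, QuotientGroup.mk (h * g)⟩ := rfl

/-- The shift `ᾱ` as an equivalence of the vertex set. -/
def aEquiv : CVert α V ≃ CVert α V :=
  Equiv.sigmaCongr (Equiv.addRight (1 : ℤ)) (fun n =>
    Quotient.congr α.toEquiv (by
      intro a b
      rw [QuotientGroup.leftRel_apply, QuotientGroup.leftRel_apply]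
      show a⁻¹ * b ∈ aSub α V n ↔ (α a)⁻¹ * (α b) ∈ aSub α V (n + 1)
      have h1 : (α a)⁻¹ * α b = (α ^ (1 : ℤ)) (a⁻¹ * b) := by
        rw [zpow_one, map_mul, map_inv]
      rw [h1, mem_aSub_iff']
      have e : n + 1 - 1 = n := by ring
      rw [e]))

omit hmap in
@[simp] lemma aEquiv_mk (n : ℤ) (g : H) :
    aEquiv (α := α) (V := V) ⟨n, QuotientGroup.mk g⟩ = ⟨n + 1, QuotientGroup.mk (α g)⟩ := rfl

omit hmap in
lemma mk_mul_left_iff (n : ℤ) (h g g' : H) :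
    (QuotientGroup.mk (h * g) : H ⧸ aSub α V n) = QuotientGroup.mk (h * g') ↔
      (QuotientGroup.mk g : H ⧸ aSub α V n) = QuotientGroup.mk g' := by
  rw [QuotientGroup.eq, QuotientGroup.eq]
  have e : (h * g)⁻¹ * (h * g') = g⁻¹ * g' := by group
  rw [e]

/-- Left translation as a graph automorphism. -/
def lIso (h : H) : cosetGraph α V ≃g cosetGraph α V where
  toEquiv := lEquiv (α := α) (V := V) h
  map_rel_iff' := by
    rintro ⟨n, x⟩ ⟨m, x'⟩
    obtain ⟨g, rfl⟩ := Quotient.exists_rep x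
    obtain ⟨g', rfl⟩ := Quotient.exists_rep x'
    show (cosetGraph α V).Adj ⟨n, QuotientGroup.mk (h * g)⟩ ⟨m, QuotientGroup.mk (h * g')⟩ ↔
      (cosetGraph α V).Adj ⟨n, QuotientGroup.mk g⟩ ⟨m, QuotientGroup.mk g'⟩
    rw [adj_iff hmap, adj_iff hmap, mk_mul_left_iff, mk_mul_left_iff]

/-- The shift `ᾱ` as a graph automorphism. -/
def aIso : cosetGraph α V ≃g cosetGraph α V where
  toEquiv := aEquiv (α := α) (V := V)
  map_rel_iff' := by
    rintro ⟨n, x⟩ ⟨m, x'⟩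
    obtain ⟨g, rfl⟩ := Quotient.exists_rep x
    obtain ⟨g', rfl⟩ := Quotient.exists_rep x'
    show (cosetGraph α V).Adj ⟨n + 1, QuotientGroup.mk (α g)⟩ ⟨m + 1, QuotientGroup.mk (α g')⟩ ↔
      (cosetGraph α V).Adj ⟨n, QuotientGroup.mk g⟩ ⟨m, QuotientGroup.mk g'⟩
    rw [adj_iff hmap, adj_iff hmap, mk_eq_mk_iff, mk_eq_mk_iff]
    constructor
    · rintro (⟨h1, h2⟩ | ⟨h1, h2⟩)
      · exact Or.inl ⟨by omega, h2⟩
      · exact Or.inr ⟨by omega, h2⟩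
    · rintro (⟨h1, h2⟩ | ⟨h1, h2⟩)
      · exact Or.inl ⟨by omega, h2⟩
      · exact Or.inr ⟨by omega, h2⟩

@[simp] lemma aIso_mk (n : ℤ) (g : H) :
    aIso hmap ⟨n, QuotientGroup.mk g⟩ = ⟨n + 1, QuotientGroup.mk (α g)⟩ := rfl

@[simp] lemma lIso_mk (h : H) (n : ℤ) (g : H) :
    lIso hmap h ⟨n, QuotientGroup.mk g⟩ = ⟨n, QuotientGroup.mk (h * g)⟩ := rfl

lemma aIso_inv_mk (n : ℤ) (g : H) :
    (aIso hmap)⁻¹ ⟨n, QuotientGroup.mk g⟩ = ⟨n - 1, QuotientGroup.mk (α⁻¹ g)⟩ := by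
  have h1 : aIso hmap ⟨n - 1, QuotientGroup.mk (α⁻¹ g)⟩ = ⟨n, QuotientGroup.mk g⟩ := by
    rw [aIso_mk]
    exact vmk_congr (by ring) (by simp)
  show (aIso hmap).symm _ = _
  rw [← h1]
  exact (aIso hmap).symm_apply_apply _

lemma aIso_zpow (k : ℤ) : ∀ (n : ℤ) (g : H),
    ((aIso hmap) ^ k) ⟨n, QuotientGroup.mk g⟩ =
      ⟨n + k, QuotientGroup.mk ((α ^ k) g)⟩ := by
  induction k using Int.induction_on with
  | zero =>
    intro n g
    rw [zpow_zero]
    show (⟨n, QuotientGroup.mk g⟩ : CVert α V) = _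
    exact vmk_congr (by ring) (by simp)
  | succ k ih =>
    intro n g
    rw [zpow_add_one, RelIso.mul_apply, aIso_mk, ih]
    exact vmk_congr (by ring) (by rw [← MulAut.mul_apply, ← zpow_add_one])
  | pred k ih =>
    intro n g
    rw [zpow_sub_one, RelIso.mul_apply, aIso_inv_mk, ih]
    exact vmk_congr (by ring) (by rw [← MulAut.mul_apply, ← zpow_sub_one])

end Autos

end Mono

end St14
end Scale

open Scale in
/-- If `α(V) ≤ V` with finite index `q ≥ 2` and `H = ⋃ α⁻ⁿ(V)`, then the
coset graph `T^(α)` is a `(q+1)`-regular tree, left translations and the shift `ᾱ` are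
graph automorphisms, and together they generate a vertex-transitive group of
automorphisms. -/
theorem statement_14 (q : ℕ) (hq : 2 ≤ q) {H : Type*} [Group H] (α : MulAut H)
    (V : Subgroup H)
    (hmap : aSub α V 1 ≤ V)
    (hidx : (aSub α V 1).relIndex V = q)
    (hunion : ∀ h : H, ∃ n : ℕ, (α ^ (n : ℤ)) h ∈ V) :
    (cosetGraph α V).IsTree ∧
    (∀ u : CVert α V, ((cosetGraph α V).neighborSet u).ncard = q + 1) ∧
    ∃ (L : H → (cosetGraph α V ≃g cosetGraph α V))
      (A : cosetGraph α V ≃g cosetGraph α V),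
      (∀ (h g : H) (n : ℤ),
        L h ⟨n, QuotientGroup.mk g⟩ = (⟨n, QuotientGroup.mk (h * g)⟩ : CVert α V)) ∧
      (∀ (g : H) (n : ℤ),
        A ⟨n, QuotientGroup.mk g⟩ = (⟨n + 1, QuotientGroup.mk (α g)⟩ : CVert α V)) ∧
      (∀ u u' : CVert α V,
        ∃ φ ∈ Subgroup.closure (insert A (Set.range L)), φ u = u') := by
  refine ⟨⟨Scale.St14.connected hmap hunion, Scale.St14.isAcyclic hmap⟩,
    fun u => Scale.St14.neighborSet_ncard hmap hidx hq u,
    fun h => Scale.St14.lIso hmap h, Scale.St14.aIso hmap, fun h g n => rfl, fun g n => rfl, ?_⟩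
  rintro ⟨n, x⟩ ⟨m, y⟩
  obtain ⟨g, rfl⟩ := Quotient.exists_rep x
  obtain ⟨g', rfl⟩ := Quotient.exists_rep y
  obtain ⟨k, rfl⟩ : ∃ k : ℤ, m = n + k := ⟨m - n, by ring⟩
  refine ⟨Scale.St14.lIso hmap (g' * ((α ^ k) g)⁻¹) * (Scale.St14.aIso hmap) ^ k, ?_, ?_⟩
  · refine Subgroup.mul_mem _ ?_ ?_
    · exact Subgroup.subset_closure (Set.mem_insert_of_mem _ ⟨_, rfl⟩)
    · exact Subgroup.zpow_mem _ (Subgroup.subset_closure (Set.mem_insert _ _)) k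
  · rw [RelIso.mul_apply, Scale.St14.aIso_zpow hmap k n g, Scale.St14.lIso_mk]
    exact Scale.St14.vmk_congr (by ring) (by group)
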